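/- Let G be a prime P5-free graph that is not a thin spider, and suppose D = {d_1, d_2} is an efficient dominating set of G. Then either deg(d_1) = deg(d_2) = δ(G) and d_1, d_2 are the only vertices of minimum degree in G, or (up to swapping indices) deg(d_1) = δ(G) and d_1 is the only vertex of minimum degree in G. -/

import Mathlib

open SimpleGraph

/-- `D` is an efficient dominating set: every vertex is dominated by exactly one vertex of `D`
(a vertex dominates itself and its neighbors). -/
def SimpleGraph.IsEDS {V : Type*} (G : SimpleGraph V) (D : Set V) : Prop :=
  ∀ v : V, ∃! d, d ∈ D ∧ (d = v ∨ G.Adj d v)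

/-- The closed neighborhood of a vertex. -/
def SimpleGraph.closedNbhd {V : Type*} (G : SimpleGraph V) (v : V) : Set V :=
  insert v (G.neighborSet v)

/-- A homogeneous set: at least two vertices, not all of them, and every outside vertex is
adjacent to all or to none of them. -/
def SimpleGraph.IsHomogeneousSet {V : Type*} (G : SimpleGraph V) (H : Set V) : Prop :=
  2 ≤ H.ncard ∧ H ≠ Set.univ ∧
    ∀ v ∉ H, (∀ h ∈ H, G.Adj v h) ∨ (∀ h ∈ H, ¬ G.Adj v h)

/-- A prime graph: at least two vertices and no homogeneous set. -/
def SimpleGraph.IsPrime {V : Type*} [Fintype V] (G : SimpleGraph V) : Prop :=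
  2 ≤ Fintype.card V ∧ ∀ H : Set V, ¬ G.IsHomogeneousSet H

/-- `G` is `P₅`-free: no induced subgraph isomorphic to the path on five vertices. -/
def SimpleGraph.P5Free {V : Type*} (G : SimpleGraph V) : Prop :=
  ¬ Nonempty (SimpleGraph.pathGraph 5 ↪g G)

/-- The graph `2P₂`: the disjoint union of two edges. -/
def twoP2 : SimpleGraph (Fin 4) :=
  SimpleGraph.fromRel (fun a b => (a = 0 ∧ b = 1) ∨ (a = 2 ∧ b = 3))

/-- `G` is `2P₂`-free: no induced subgraph isomorphic to `2P₂`. -/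
def SimpleGraph.TwoP2Free {V : Type*} (G : SimpleGraph V) : Prop :=
  ¬ Nonempty (twoP2 ↪g G)

/-- A thin spider: a split graph with a clique side `C` and independent side `I`,
with a perfect matching between `C` and `I`. -/
def SimpleGraph.IsThinSpider {V : Type*} (G : SimpleGraph V) : Prop :=
  ∃ C I : Set V, Disjoint C I ∧ C ∪ I = Set.univ ∧ G.IsClique C ∧
    (∀ a ∈ I, ∀ b ∈ I, a ≠ b → ¬ G.Adj a b) ∧
    (∀ c ∈ C, ∃! i, i ∈ I ∧ G.Adj c i) ∧
    (∀ i ∈ I, ∃! c, c ∈ C ∧ G.Adj i c)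

lemma my_key {V : Type*} (G : SimpleGraph V)
    (hP5 : G.P5Free) {d₁ d₂ u v x : V}
    (hnadj : ¬ G.Adj d₁ d₂)
    (hAB : ∀ y, G.Adj d₁ y → G.Adj d₂ y → False)
    (hu : G.Adj d₁ u) (hv : G.Adj d₁ v) (huv : ¬ G.Adj u v)
    (hx : G.Adj d₂ x) (hux : G.Adj u x) (hvx : ¬ G.Adj v x) : False := by
  have a1 : G.Adj v d₁ := hv.symm
  have a2 : G.Adj u d₁ := hu.symm
  have a3 : G.Adj x u := hux.symm
  have a4 : G.Adj x d₂ := hx.symm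
  have n1 : ¬ G.Adj v u := fun h => huv h.symm
  have n3 : ¬ G.Adj x v := fun h => hvx h.symm
  have n4 : ¬ G.Adj v d₂ := fun h => hAB v hv h.symm
  have n5 : ¬ G.Adj d₂ v := fun h => hAB v hv h
  have n6 : ¬ G.Adj d₁ x := fun h => hAB x h hx
  have n7 : ¬ G.Adj x d₁ := fun h => hAB x h.symm hx
  have n9 : ¬ G.Adj d₂ d₁ := fun h => hnadj h.symm
  have n10 : ¬ G.Adj u d₂ := fun h => hAB u hu h.symm
  have n11 : ¬ G.Adj d₂ u := fun h => hAB u hu h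
  have e1 : v ≠ d₁ := a1.ne
  have e2 : v ≠ u := fun h => hvx (h ▸ hux)
  have e3 : v ≠ x := fun h => hAB v hv (h ▸ hx)
  have e4 : v ≠ d₂ := fun h => hnadj (h ▸ hv)
  have e5 : d₁ ≠ u := hu.ne
  have e6 : d₁ ≠ x := fun h => hnadj (show G.Adj d₁ d₂ from h ▸ hx.symm)
  have e7 : u ≠ x := fun h => hAB u hu (h ▸ hx)
  have e8 : u ≠ d₂ := fun h => hnadj (h ▸ hu)
  have e9 : x ≠ d₂ := hx.ne'
  have hne : d₁ ≠ d₂ := fun h => hAB v hv (h ▸ hv)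
  have e1' := e1.symm; have e2' := e2.symm; have e3' := e3.symm; have e4' := e4.symm
  have e5' := e5.symm; have e6' := e6.symm; have e7' := e7.symm; have e8' := e8.symm
  have e9' := e9.symm; have hne' := hne.symm
  refine hP5 ⟨⟨⟨![v, d₁, u, x, d₂], ?_⟩, ?_⟩⟩
  · intro a b
    fin_cases a <;> fin_cases b <;>
      simp [e1, e2, e3, e4, e5, e6, e7, e8, e9, e1', e2', e3', e4', e5', e6', e7', e8', e9',
        hne, hne'] <;> decide
  · intro a b
    show G.Adj (![v, d₁, u, x, d₂] a) (![v, d₁, u, x, d₂] b) ↔ _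
    fin_cases a <;> fin_cases b <;>
      simp [Function.Embedding.coeFn_mk, pathGraph_adj, a1, a2, a3, a4, hu, hv, hx, hux,
        n1, n3, n4, n5, n6, n7, n9, n10, n11, hnadj, huv, hvx, G.irrefl] <;> decide

lemma my_main {V : Type*} [Fintype V] (G : SimpleGraph V) [DecidableRel G.Adj]
    (hprime : G.IsPrime) (hP5 : G.P5Free)
    {d₁ d₂ : V} (hnadj : ¬ G.Adj d₁ d₂)
    (hAB : ∀ y, G.Adj d₁ y → G.Adj d₂ y → False)
    (hcover : ∀ x, x ≠ d₁ → x ≠ d₂ → G.Adj d₁ x ∨ G.Adj d₂ x)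
    (v : V) (hv : G.Adj d₁ v) : G.degree d₁ < G.degree v := by
  classical
  have hne : d₁ ≠ d₂ := fun h => hAB v hv (h ▸ hv)
  by_contra hlt
  push_neg at hlt
  by_cases hall : ∀ u, G.Adj d₁ u → u ≠ v → G.Adj v u
  · -- Case 2 : v is adjacent to all of N(d₁) \ {v}
    have hnoB : ∀ x, G.Adj d₂ x → ¬ G.Adj v x := by
      intro x hx hvx
      have hsub : insert d₁ (insert x ((G.neighborFinset d₁).erase v)) ⊆ G.neighborFinset v := by
        intro a ha
        simp only [Finset.mem_insert, Finset.mem_erase, mem_neighborFinset] at ha ⊢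
        rcases ha with rfl | rfl | ⟨hav, ha⟩
        · exact hv.symm
        · exact hvx
        · exact hall a ha hav
      have hxe : x ∉ (G.neighborFinset d₁).erase v := by
        simp only [Finset.mem_erase, mem_neighborFinset]
        rintro ⟨-, h⟩; exact hAB x h hx
      have hd₁e : d₁ ∉ insert x ((G.neighborFinset d₁).erase v) := by
        simp only [Finset.mem_insert, Finset.mem_erase, mem_neighborFinset]
        rintro (rfl | ⟨-, h⟩)
        · exact hnadj hx.symm
        · exact G.irrefl h
      have hvm : v ∈ G.neighborFinset d₁ := by simpa [mem_neighborFinset] using hv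
      have hcard := Finset.card_le_card hsub
      rw [Finset.card_insert_of_notMem hd₁e, Finset.card_insert_of_notMem hxe,
        Finset.card_erase_of_mem hvm] at hcard
      have hpos : 0 < (G.neighborFinset d₁).card := Finset.card_pos.mpr ⟨v, hvm⟩
      have h1 : (G.neighborFinset v).card ≤ (G.neighborFinset d₁).card := hlt
      omega
    apply hprime.2 {d₁, v}
    refine ⟨?_, ?_, ?_⟩
    · rw [Set.ncard_pair hv.ne]
    · intro h
      have hd₂ : d₂ ∈ ({d₁, v} : Set V) := h ▸ Set.mem_univ d₂
      rcases hd₂ with h' | h'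
      · exact hne h'.symm
      · exact hnadj (h' ▸ hv)
    · intro w hw
      simp only [Set.mem_insert_iff, Set.mem_singleton_iff, not_or] at hw
      obtain ⟨hw1, hw2⟩ := hw
      by_cases hwd₂ : w = d₂
      · subst hwd₂
        right
        rintro h (rfl | rfl)
        · exact fun hadj => hnadj hadj.symm
        · exact fun hadj => hAB h hv hadj
      · rcases hcover w hw1 hwd₂ with hw' | hw'
        · left
          rintro h (rfl | rfl)
          · exact hw'.symm
          · exact (hall w hw' hw2).symm
        · right
          rintro h (rfl | rfl)
          · exact fun hadj => hAB w hadj.symm hw'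
          · exact fun hadj => hnoB w hw' hadj.symm
  · -- Case 1 : some u in N(d₁), u ≠ v, not adjacent to v
    push_neg at hall
    obtain ⟨u, hu, huvne, hvu⟩ := hall
    have huv : ¬ G.Adj u v := fun h => hvu h.symm
    set T : Set V := {a | G.Adj d₁ a ∧ ∀ x, G.Adj d₂ x → (G.Adj a x ↔ G.Adj v x)} with hT
    have hvT : v ∈ T := ⟨hv, fun _ _ => Iff.rfl⟩
    have huT : u ∈ T := by
      refine ⟨hu, fun x hx => ⟨fun hux => ?_, fun hvxx => ?_⟩⟩
      · by_contra hvxn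
        exact my_key G hP5 hnadj hAB hu hv huv hx hux hvxn
      · by_contra huxn
        exact my_key G hP5 hnadj hAB hv hu hvu hx hvxx huxn
    apply hprime.2 T
    refine ⟨?_, ?_, ?_⟩
    · calc (2 : ℕ) = ({v, u} : Set V).ncard := (Set.ncard_pair (fun h => huvne h.symm)).symm
        _ ≤ T.ncard := Set.ncard_le_ncard (by
            rintro a (rfl | rfl)
            · exact hvT
            · exact huT) (Set.toFinite T)
    · intro h
      have hd₂ : d₂ ∈ T := h ▸ Set.mem_univ d₂
      exact hnadj hd₂.1
    · intro w hw
      by_cases hwd₁ : w = d₁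
      · subst hwd₁
        exact Or.inl (fun h hh => hh.1)
      · by_cases hwd₂ : w = d₂
        · subst hwd₂
          exact Or.inr (fun h hh hadj => hAB h hh.1 hadj)
        · rcases hcover w hwd₁ hwd₂ with hw' | hw'
          · left
            intro t ht
            by_contra hwt
            have hwtne : w ≠ t := fun e => hw (e ▸ ht)
            apply hw
            refine ⟨hw', fun x hx => ?_⟩
            have htw : ¬ G.Adj t w := fun h => hwt h.symm
            have h1 : G.Adj w x ↔ G.Adj t x := by
              constructor
              · intro hwx
                by_contra htx
                exact my_key G hP5 hnadj hAB hw' ht.1 hwt hx hwx htx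
              · intro htx
                by_contra hwx
                exact my_key G hP5 hnadj hAB ht.1 hw' htw hx htx hwx
            exact h1.trans (ht.2 x hx)
          · by_cases hvw : G.Adj v w
            · left
              intro t ht
              exact ((ht.2 w hw').mpr hvw).symm
            · right
              intro t ht hwt
              exact hvw ((ht.2 w hw').mp hwt.symm)

theorem stmt_9 {V : Type*} [Fintype V] [Nonempty V] (G : SimpleGraph V) [DecidableRel G.Adj]
    (hprime : G.IsPrime) (hP5 : G.P5Free) (hns : ¬ G.IsThinSpider)
    (d₁ d₂ : V) (hne : d₁ ≠ d₂) (hD : G.IsEDS {d₁, d₂}) :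
    (G.degree d₁ = G.minDegree ∧ G.degree d₂ = G.minDegree ∧
        ∀ v : V, G.degree v = G.minDegree → v = d₁ ∨ v = d₂) ∨
      (G.degree d₁ = G.minDegree ∧ ∀ v : V, G.degree v = G.minDegree → v = d₁) ∨
      (G.degree d₂ = G.minDegree ∧ ∀ v : V, G.degree v = G.minDegree → v = d₂) := by
  classical
  have hmem1 : d₁ ∈ ({d₁, d₂} : Set V) := Set.mem_insert _ _
  have hmem2 : d₂ ∈ ({d₁, d₂} : Set V) := Set.mem_insert_iff.mpr (Or.inr rfl)
  have hnadj : ¬ G.Adj d₁ d₂ := by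
    intro h
    obtain ⟨d, -, huniq⟩ := hD d₁
    have h1 := huniq d₁ ⟨hmem1, Or.inl rfl⟩
    have h2 := huniq d₂ ⟨hmem2, Or.inr h.symm⟩
    exact hne (h1.trans h2.symm)
  have hAB : ∀ y, G.Adj d₁ y → G.Adj d₂ y → False := by
    intro y hy1 hy2
    obtain ⟨d, -, huniq⟩ := hD y
    have h1 := huniq d₁ ⟨hmem1, Or.inr hy1⟩
    have h2 := huniq d₂ ⟨hmem2, Or.inr hy2⟩
    exact hne (h1.trans h2.symm)
  have hcover : ∀ x, x ≠ d₁ → x ≠ d₂ → G.Adj d₁ x ∨ G.Adj d₂ x := by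
    intro x hx1 hx2
    obtain ⟨d, ⟨hdmem, hdom⟩, -⟩ := hD x
    rcases hdmem with rfl | rfl
    · rcases hdom with rfl | h
      · exact absurd rfl hx1
      · exact Or.inl h
    · rcases hdom with rfl | h
      · exact absurd rfl hx2
      · exact Or.inr h
  have hm1 : ∀ v, G.Adj d₁ v → G.degree d₁ < G.degree v :=
    my_main G hprime hP5 hnadj hAB hcover
  have hm2 : ∀ v, G.Adj d₂ v → G.degree d₂ < G.degree v :=
    my_main G hprime hP5 (fun h => hnadj h.symm) (fun y a b => hAB y b a)
      (fun x a b => (hcover x b a).symm)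
  have hmin : ∀ v, G.degree v = G.minDegree → v = d₁ ∨ v = d₂ := by
    intro v hv
    by_contra hc
    push_neg at hc
    rcases hcover v hc.1 hc.2 with h | h
    · have h1 := hm1 v h
      have h2 := G.minDegree_le_degree d₁
      omega
    · have h1 := hm2 v h
      have h2 := G.minDegree_le_degree d₂
      omega
  obtain ⟨w, hw⟩ := G.exists_minimal_degree_vertex
  rcases hmin w hw.symm with rfl | rfl
  · by_cases h2 : G.degree d₂ = G.minDegree
    · exact Or.inl ⟨hw.symm, h2, hmin⟩
    · refine Or.inr (Or.inl ⟨hw.symm, fun v hv => ?_⟩)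
      rcases hmin v hv with rfl | rfl
      · rfl
      · exact absurd hv h2
  · by_cases h1 : G.degree d₁ = G.minDegree
    · exact Or.inl ⟨h1, hw.symm, hmin⟩
    · refine Or.inr (Or.inr ⟨hw.symm, fun v hv => ?_⟩)
      rcases hmin v hv with rfl | rfl
      · exact absurd hv h1
      · rfl
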